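/- There exists a super-simple (5,2)-DGDD of group type 5⁵ (five groups each of size 5, so 25 points) with d ≥ 1/2. -/

import Mathlib

/-- A block collection is super-simple if any two of its blocks (counted with
multiplicity) share at most two points. -/
def SuperSimple (v : ℕ) (B : Multiset (List (Fin v))) : Prop :=
  ∀ b₁ b₂ : List (Fin v), ({b₁, b₂} : Multiset (List (Fin v))) ≤ B →
    (b₁.toFinset ∩ b₂.toFinset).card ≤ 2

/-- `(Fin v, G, B)` is a `(k,λ)` directed group divisible design (DGDD):
`G` partitions the point set into groups, every block is an ordered `k`-tuple
of distinct points meeting each group in at most one point, and every ordered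
pair of points from distinct groups appears (in order) in exactly `lam` blocks. -/
def IsDGDD (v k lam : ℕ) (G : Finset (Finset (Fin v)))
    (B : Multiset (List (Fin v))) : Prop :=
  (∀ x : Fin v, ∃! g, g ∈ G ∧ x ∈ g) ∧
  (∀ b ∈ B, b.length = k ∧ b.Nodup ∧
    ∀ g ∈ G, ∀ x ∈ b, ∀ y ∈ b, x ∈ g → y ∈ g → x = y) ∧
  ∀ x y : Fin v, (∀ g ∈ G, ¬(x ∈ g ∧ y ∈ g)) →
    Multiset.countP (fun b => [x, y].Sublist b) B = lam

/-- `S` is a defining set of the `(k,λ)`-DGDD `(Fin v, G, B)`: it is a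
subcollection of `B`, and `B` is the unique `(k,λ)`-DGDD with the same point
set and group set whose block collection contains `S`. -/
def IsDGDDDefiningSet (v k lam : ℕ) (G : Finset (Finset (Fin v)))
    (B S : Multiset (List (Fin v))) : Prop :=
  S ≤ B ∧ ∀ B' : Multiset (List (Fin v)),
    IsDGDD v k lam G B' → S ≤ B' → B' = B

/-- `d ≥ 1/2` for a DGDD: every defining set (in particular a smallest one)
contains at least half of the blocks. -/
def DGDDDefiningSetsAtLeastHalf (v k lam : ℕ) (G : Finset (Finset (Fin v)))
    (B : Multiset (List (Fin v))) : Prop :=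
  ∀ S : Multiset (List (Fin v)), IsDGDDDefiningSet v k lam G B S →
    Multiset.card B ≤ 2 * Multiset.card S

/-- There exists a super-simple `(k,λ)`-DGDD whose group type (the multiset of
group sizes) is `T`, with `d ≥ 1/2`. -/
def ExistsSuperSimpleDGDDHalf (k lam : ℕ) (T : Multiset ℕ) : Prop :=
  ∃ (v : ℕ) (G : Finset (Finset (Fin v))) (B : Multiset (List (Fin v))),
    IsDGDD v k lam G B ∧ SuperSimple v B ∧
    Multiset.map Finset.card G.val = T ∧
    DGDDDefiningSetsAtLeastHalf v k lam G B

namespace DGDD55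

abbrev Pt := Fin 25
abbrev Blk := List Pt

def pairs : List (Blk × Blk) := [
  ([0, 6, 14, 19, 21], [22, 17, 10, 6, 0]),
  ([1, 7, 10, 15, 22], [23, 18, 11, 7, 1]),
  ([2, 8, 11, 16, 23], [24, 19, 12, 8, 2]),
  ([3, 9, 12, 17, 24], [20, 15, 13, 9, 3]),
  ([4, 5, 13, 18, 20], [21, 16, 14, 5, 4]),
  ([0, 7, 11, 17, 20], [21, 15, 12, 7, 0]),
  ([1, 8, 12, 18, 21], [22, 16, 13, 8, 1]),
  ([2, 9, 13, 19, 22], [23, 17, 14, 9, 2]),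
  ([3, 5, 14, 15, 23], [24, 18, 10, 5, 3]),
  ([4, 6, 10, 16, 24], [20, 19, 11, 6, 4]),
  ([0, 8, 13, 15, 24], [20, 18, 14, 8, 0]),
  ([1, 9, 14, 16, 20], [21, 19, 10, 9, 1]),
  ([2, 5, 10, 17, 21], [22, 15, 11, 5, 2]),
  ([3, 6, 11, 18, 22], [23, 16, 12, 6, 3]),
  ([4, 7, 12, 19, 23], [24, 17, 13, 7, 4]),
  ([0, 9, 10, 18, 23], [24, 16, 11, 9, 0]),
  ([1, 5, 11, 19, 24], [20, 17, 12, 5, 1]),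
  ([2, 6, 12, 15, 20], [21, 18, 13, 6, 2]),
  ([3, 7, 13, 16, 21], [22, 19, 14, 7, 3]),
  ([4, 8, 14, 17, 22], [23, 15, 10, 8, 4]),
  ([0, 5, 12, 16, 22], [23, 19, 13, 5, 0]),
  ([1, 6, 13, 17, 23], [24, 15, 14, 6, 1]),
  ([2, 7, 14, 18, 24], [20, 16, 10, 7, 2]),
  ([3, 8, 10, 19, 20], [21, 17, 11, 8, 3]),
  ([4, 9, 11, 15, 21], [22, 18, 12, 9, 4]),
  ([0, 7, 13, 18, 22], [24, 19, 10, 7, 0]),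
  ([1, 8, 14, 19, 23], [20, 15, 11, 8, 1]),
  ([2, 9, 10, 15, 24], [21, 16, 12, 9, 2]),
  ([3, 5, 11, 16, 20], [22, 17, 13, 5, 3]),
  ([4, 6, 12, 17, 21], [23, 18, 14, 6, 4]),
  ([0, 8, 10, 16, 21], [23, 17, 12, 8, 0]),
  ([1, 9, 11, 17, 22], [24, 18, 13, 9, 1]),
  ([2, 5, 12, 18, 23], [20, 19, 14, 5, 2]),
  ([3, 6, 13, 19, 24], [21, 15, 10, 6, 3]),
  ([4, 7, 14, 15, 20], [22, 16, 11, 7, 4]),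
  ([0, 9, 12, 19, 20], [22, 15, 14, 9, 0]),
  ([1, 5, 13, 15, 21], [23, 16, 10, 5, 1]),
  ([2, 6, 14, 16, 22], [24, 17, 11, 6, 2]),
  ([3, 7, 10, 17, 23], [20, 18, 12, 7, 3]),
  ([4, 8, 11, 18, 24], [21, 19, 13, 8, 4]),
  ([0, 5, 14, 17, 24], [21, 18, 11, 5, 0]),
  ([1, 6, 10, 18, 20], [22, 19, 12, 6, 1]),
  ([2, 7, 11, 19, 21], [23, 15, 13, 7, 2]),
  ([3, 8, 12, 15, 22], [24, 16, 14, 8, 3]),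
  ([4, 9, 13, 16, 23], [20, 17, 10, 9, 4]),
  ([0, 6, 11, 15, 23], [20, 16, 13, 6, 0]),
  ([1, 7, 12, 16, 24], [21, 17, 14, 7, 1]),
  ([2, 8, 13, 17, 20], [22, 18, 10, 8, 2]),
  ([3, 9, 14, 18, 21], [23, 19, 11, 9, 3]),
  ([4, 5, 10, 19, 22], [24, 15, 12, 5, 4])]

def Lb : List Blk := pairs.flatMap fun p => [p.1, p.2]
def Bm : Multiset Blk := ↑Lb

def grp (i : Fin 5) : Finset Pt := Finset.univ.filter (fun y => y.val / 5 = i.val)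
def Gs : Finset (Finset Pt) := Finset.univ.image grp

def swapHead : Blk → Blk
  | x :: y :: t => y :: x :: t
  | l => l

def swapLast2 : Blk → Blk
  | [a,b,c,d,e] => [a,b,c,e,d]
  | l => l

/-- The list of ordered pairs occurring (in order) in a block. -/
def opl : Blk → List (Pt × Pt)
  | [] => []
  | x :: t => (t.map fun y => (x, y)) ++ opl t

set_option maxRecDepth 1000000
set_option maxHeartbeats 16000000

/-! ### Decidable facts -/

theorem F1 : ∀ x y : Pt, x.val/5 ≠ y.val/5 →
    Multiset.countP (fun b => [x,y].Sublist b) Bm = 2 := by decide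

theorem F2 : ∀ b ∈ Lb, b.length = 5 ∧ b.Nodup ∧
    ∀ x ∈ b, ∀ y ∈ b, x.val/5 = y.val/5 → x = y := by decide

theorem F3 : Lb.Nodup := by decide

theorem F4 : ∀ b₁ ∈ Lb, ∀ b₂ ∈ Lb, b₁ ≠ b₂ →
    (b₁.filter (fun a => a ∈ b₂)).length ≤ 2 := by decide

theorem F6 : ∀ p ∈ pairs,
    (↑(opl (swapHead p.1) ++ opl (swapLast2 p.2)) : Multiset (Pt × Pt)) =
      ↑(opl p.1 ++ opl p.2) := by decide

theorem F7 : ∀ p ∈ pairs, ∀ b ∈ [swapHead p.1, swapLast2 p.2], b.length = 5 ∧ b.Nodup ∧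
    ∀ x ∈ b, ∀ y ∈ b, x.val/5 = y.val/5 → x = y := by decide

theorem F8 : ∀ p ∈ pairs, swapHead p.1 ≠ p.1 ∧ swapLast2 p.2 ≠ p.1 := by decide

theorem F9 : ∀ p ∈ pairs, ∀ q ∈ pairs, p ≠ q →
    p.1 ≠ q.1 ∧ p.1 ≠ q.2 ∧ p.2 ≠ q.1 ∧ p.2 ≠ q.2 := by decide

theorem F10 : pairs.Nodup := by decide

theorem F11 : ∀ i : Fin 5, (grp i).card = 5 := by decide

/-! ### pairs of blocks are inside `Bm` -/

theorem sublist_flatMap {α β : Type*} (f : α → List β) :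
    ∀ {l : List α} {a : α}, a ∈ l → List.Sublist (f a) (l.flatMap f) := by
  intro l
  induction l with
  | nil => intro a ha; exact absurd ha List.not_mem_nil
  | cons h t ih =>
    intro a ha
    rw [List.flatMap_cons]
    rcases List.mem_cons.mp ha with rfl | ha
    · exact List.sublist_append_left _ _
    · exact (ih ha).trans (List.sublist_append_right _ _)

theorem pair_le (p : Blk × Blk) (hp : p ∈ pairs) : ({p.1, p.2} : Multiset Blk) ≤ Bm := by
  have h := sublist_flatMap (fun p : Blk × Blk => [p.1, p.2]) hp
  exact Multiset.coe_le.mpr h.subperm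

theorem mem_Lb_fst (p : Blk × Blk) (hp : p ∈ pairs) : p.1 ∈ Lb :=
  (sublist_flatMap (fun p : Blk × Blk => [p.1, p.2]) hp).subset (by simp)

theorem mem_Lb_snd (p : Blk × Blk) (hp : p ∈ pairs) : p.2 ∈ Lb :=
  (sublist_flatMap (fun p : Blk × Blk => [p.1, p.2]) hp).subset (by simp)

/-! ### ordered pairs of a block -/

theorem mem_opl {x y : Pt} : ∀ {b : Blk}, (x, y) ∈ opl b ↔ [x, y].Sublist b := by
  intro b
  induction b with
  | nil => simp [opl]
  | cons a t ih =>
    simp only [opl, List.mem_append, List.mem_map, ih]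
    constructor
    · rintro (⟨y', hy', heq⟩ | h)
      · injection heq with ha hy
        subst ha; subst hy
        exact (List.singleton_sublist.mpr hy').cons₂ a
      · exact h.cons a
    · intro h
      cases h with
      | cons _ h => exact Or.inr h
      | cons_cons _ h => exact Or.inl ⟨y, List.singleton_sublist.mp h, rfl⟩

theorem opl_fst {a b : Pt} : ∀ {l : Blk}, (a, b) ∈ opl l → a ∈ l := by
  intro l
  induction l with
  | nil => simp [opl]
  | cons x t ih =>
    intro h
    rcases List.mem_append.mp h with h | h
    · obtain ⟨y', _, heq⟩ := List.mem_map.mp h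
      have : x = a := congrArg Prod.fst heq
      simp [this]
    · exact List.mem_cons_of_mem _ (ih h)

theorem opl_nodup : ∀ {b : Blk}, b.Nodup → (opl b).Nodup := by
  intro b
  induction b with
  | nil => simp [opl]
  | cons a t ih =>
    intro h
    rw [List.nodup_cons] at h
    rw [opl, List.nodup_append]
    refine ⟨h.2.map (fun y₁ y₂ hy => by simpa using congrArg Prod.snd hy), ih h.2, ?_⟩
    intro z hz1 w hz2 hzw
    subst hzw
    obtain ⟨y', _, heq⟩ := List.mem_map.mp hz1
    obtain ⟨u, v⟩ := z
    have hu : u = a := (congrArg Prod.fst heq).symm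
    exact h.1 (hu ▸ opl_fst hz2)

theorem ind_eq_count (x y : Pt) {b : Blk} (hb : b.Nodup) :
    (if [x, y].Sublist b then 1 else 0)
      = Multiset.count (x, y) (↑(opl b) : Multiset (Pt × Pt)) := by
  by_cases h : [x, y].Sublist b
  · rw [if_pos h]
    have hnd : (↑(opl b) : Multiset (Pt × Pt)).Nodup := Multiset.coe_nodup.mpr (opl_nodup hb)
    have h1 := Multiset.nodup_iff_count_le_one.mp hnd (x, y)
    have h2 : 0 < Multiset.count (x, y) (↑(opl b) : Multiset (Pt × Pt)) :=
      Multiset.count_pos.mpr (Multiset.mem_coe.mpr (mem_opl.mpr h))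
    omega
  · rw [if_neg h]
    symm
    rw [Multiset.count_eq_zero]
    exact fun hm => h (mem_opl.mp (Multiset.mem_coe.mp hm))

theorem countP_pair (p : Blk → Prop) [DecidablePred p] (b₁ b₂ : Blk) :
    Multiset.countP p ({b₁, b₂} : Multiset Blk) =
      (if p b₁ then 1 else 0) + (if p b₂ then 1 else 0) := by
  show Multiset.countP p (b₁ ::ₘ b₂ ::ₘ 0) = _
  rw [Multiset.countP_cons, Multiset.countP_cons, Multiset.countP_zero]
  omega

theorem flip_countP (p : Blk × Blk) (hp : p ∈ pairs) (x y : Pt) :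
    Multiset.countP (fun b => [x,y].Sublist b)
      ({swapHead p.1, swapLast2 p.2} : Multiset Blk) =
    Multiset.countP (fun b => [x,y].Sublist b) ({p.1, p.2} : Multiset Blk) := by
  have hb1 : p.1.Nodup := (F2 _ (mem_Lb_fst p hp)).2.1
  have hb2 : p.2.Nodup := (F2 _ (mem_Lb_snd p hp)).2.1
  have hc1 : (swapHead p.1).Nodup := (F7 p hp _ (by simp)).2.1
  have hc2 : (swapLast2 p.2).Nodup := (F7 p hp _ (by simp)).2.1
  rw [countP_pair, countP_pair, ind_eq_count x y hb1, ind_eq_count x y hb2,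
    ind_eq_count x y hc1, ind_eq_count x y hc2]
  have hcnt := congrArg (Multiset.count (x, y)) (F6 p hp)
  rw [← Multiset.coe_add, ← Multiset.coe_add, Multiset.count_add, Multiset.count_add] at hcnt
  omega

/-! ### Group bridges -/

theorem mem_grp {y : Pt} {i : Fin 5} : y ∈ grp i ↔ y.val / 5 = i.val := by
  simp [grp]

theorem mem_Gs {g : Finset Pt} : g ∈ Gs ↔ ∃ i, grp i = g := by
  simp [Gs]

def gidx (x : Pt) : Fin 5 := ⟨x.val / 5, by omega⟩

theorem mem_grp_gidx (x : Pt) : x ∈ grp (gidx x) := mem_grp.mpr rfl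

theorem hGpart : ∀ x : Pt, ∃! g, g ∈ Gs ∧ x ∈ g := by
  intro x
  refine ⟨grp (gidx x), ⟨mem_Gs.mpr ⟨_, rfl⟩, mem_grp_gidx x⟩, ?_⟩
  rintro g' ⟨hg', hx⟩
  obtain ⟨i, rfl⟩ := mem_Gs.mp hg'
  have h : x.val / 5 = i.val := mem_grp.mp hx
  have : i = gidx x := Fin.ext (by simpa [gidx] using h.symm)
  rw [this]

theorem bridge1 (b : Blk) (h : ∀ x ∈ b, ∀ y ∈ b, x.val/5 = y.val/5 → x = y) :
    ∀ g ∈ Gs, ∀ x ∈ b, ∀ y ∈ b, x ∈ g → y ∈ g → x = y := by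
  intro g hg x hx y hy hxg hyg
  obtain ⟨i, rfl⟩ := mem_Gs.mp hg
  exact h x hx y hy ((mem_grp.mp hxg).trans (mem_grp.mp hyg).symm)

theorem bridge2 (x y : Pt) (h : ∀ g ∈ Gs, ¬(x ∈ g ∧ y ∈ g)) : x.val/5 ≠ y.val/5 := by
  intro heq
  exact h (grp (gidx x)) (mem_Gs.mpr ⟨_, rfl⟩)
    ⟨mem_grp_gidx x, mem_grp.mpr heq.symm⟩

theorem grp_inj : Function.Injective grp := by
  intro i j hij
  have hd : 5 * i.val / 5 = i.val := Nat.mul_div_cancel_left _ (by norm_num)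
  have h1 : (⟨5 * i.val, by omega⟩ : Pt) ∈ grp i := mem_grp.mpr hd
  rw [hij] at h1
  have h2 : 5 * i.val / 5 = j.val := mem_grp.mp h1
  exact Fin.ext (by omega)

theorem htype : Multiset.map Finset.card Gs.val = Multiset.replicate 5 5 := by
  have h : Gs.val = Multiset.map grp (Finset.univ : Finset (Fin 5)).val := by
    rw [Gs, Finset.image_val, Multiset.dedup_eq_self.mpr]
    exact Multiset.Nodup.map grp_inj Finset.univ.nodup
  rw [h, Multiset.map_map]
  have h2 : (Finset.card ∘ grp) = fun _ : Fin 5 => 5 := funext fun i => F11 i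
  rw [h2, Multiset.map_const']
  rfl

/-! ### the design is a DGDD -/

theorem hBmNodup : Bm.Nodup := Multiset.coe_nodup.mpr F3

theorem block_cond : ∀ b ∈ Bm, b.length = 5 ∧ b.Nodup ∧
    ∀ g ∈ Gs, ∀ x ∈ b, ∀ y ∈ b, x ∈ g → y ∈ g → x = y := by
  intro b hb
  obtain ⟨h1, h2, h3⟩ := F2 b (Multiset.mem_coe.mp hb)
  exact ⟨h1, h2, bridge1 b h3⟩

theorem hDGDD : IsDGDD 25 5 2 Gs Bm := by
  refine ⟨hGpart, block_cond, ?_⟩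
  intro x y hxy
  exact F1 x y (bridge2 x y hxy)

/-! ### super-simplicity -/

theorem inter_card_le (b₁ b₂ : Blk) :
    (b₁.toFinset ∩ b₂.toFinset).card ≤ (b₁.filter (fun a => a ∈ b₂)).length := by
  calc (b₁.toFinset ∩ b₂.toFinset).card
      ≤ (b₁.filter (fun a => a ∈ b₂)).toFinset.card := by
        apply Finset.card_le_card
        intro x hx
        simp only [Finset.mem_inter, List.mem_toFinset] at hx
        simp only [List.mem_toFinset, List.mem_filter, decide_eq_true_iff]
        exact hx
    _ ≤ _ := List.toFinset_card_le _

theorem hSS : SuperSimple 25 Bm := by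
  intro b₁ b₂ h
  have hsub := Multiset.subset_of_le h
  have hb₁ : b₁ ∈ Bm := hsub (by simp)
  have hb₂ : b₂ ∈ Bm := hsub (by simp)
  by_cases heq : b₁ = b₂
  · exfalso
    have hc := Multiset.le_iff_count.mp h b₁
    have h2 : Multiset.count b₁ ({b₁, b₂} : Multiset Blk) = 2 := by
      subst heq; simp [Multiset.count_cons]
    have hle1 := Multiset.nodup_iff_count_le_one.mp hBmNodup b₁
    omega
  · exact le_trans (inter_card_le b₁ b₂)
      (F4 b₁ (Multiset.mem_coe.mp hb₁) b₂ (Multiset.mem_coe.mp hb₂) heq)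

/-! ### defining sets contain at least half of the blocks -/

theorem count_pair_self (a b : Blk) : 1 ≤ Multiset.count a ({a, b} : Multiset Blk) := by
  simp [Multiset.count_cons]

theorem hmem_pairs {S : Multiset Blk} (hSB : S ≤ Bm)
    (huniq : ∀ B' : Multiset Blk, IsDGDD 25 5 2 Gs B' → S ≤ B' → B' = Bm) :
    ∀ p ∈ pairs, p.1 ∈ S ∨ p.2 ∈ S := by
  intro p hp
  by_contra hc
  push_neg at hc
  obtain ⟨hn1, hn2⟩ := hc
  have hle := pair_le p hp
  obtain ⟨rest, hrest⟩ := Multiset.le_iff_exists_add.mp hle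
  set c₁ := swapHead p.1 with hc₁
  set c₂ := swapLast2 p.2 with hc₂
  set B' : Multiset Blk := ({c₁, c₂} : Multiset Blk) + rest with hB'
  have hmem1 : p.1 ∈ Bm := Multiset.mem_of_le hle (by simp)
  have hcnt1 : Multiset.count p.1 Bm = 1 := by
    have h1 := Multiset.nodup_iff_count_le_one.mp hBmNodup p.1
    have h2 := Multiset.count_pos.mpr hmem1
    omega
  have hrest1 : Multiset.count p.1 rest = 0 := by
    have h := hcnt1
    rw [hrest, Multiset.count_add] at h
    have h2 := count_pair_self p.1 p.2
    omega
  have hS' : S ≤ B' := by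
    rw [Multiset.le_iff_count]
    intro a
    have hSa := Multiset.le_iff_count.mp hSB a
    rw [hrest, Multiset.count_add] at hSa
    rw [hB', Multiset.count_add]
    by_cases h1 : a = p.1
    · rw [h1, Multiset.count_eq_zero.mpr hn1]; exact Nat.zero_le _
    by_cases h2 : a = p.2
    · rw [h2, Multiset.count_eq_zero.mpr hn2]; exact Nat.zero_le _
    · have hz : Multiset.count a ({p.1, p.2} : Multiset Blk) = 0 := by
        rw [Multiset.count_eq_zero]
        simp only [Multiset.insert_eq_cons, Multiset.mem_cons, Multiset.mem_singleton]
        tauto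
      rw [hz] at hSa
      omega
  have hD' : IsDGDD 25 5 2 Gs B' := by
    refine ⟨hGpart, ?_, ?_⟩
    · intro b hb
      rcases Multiset.mem_add.mp hb with h | h
      · have hb' : b ∈ [c₁, c₂] := by
          simpa [Multiset.insert_eq_cons] using h
        obtain ⟨h1, h2, h3⟩ := F7 p hp b hb'
        exact ⟨h1, h2, bridge1 b h3⟩
      · have hbBm : b ∈ Bm := by
          rw [hrest]; exact Multiset.mem_add.mpr (Or.inr h)
        exact block_cond b hbBm
    · intro x y hxy
      have hx5 := bridge2 x y hxy
      have hF := F1 x y hx5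
      rw [hrest, Multiset.countP_add] at hF
      rw [hB', Multiset.countP_add, flip_countP p hp x y]
      exact hF
  have hBB := huniq B' hD' hS'
  have hcnt' : Multiset.count p.1 B' = 1 := by rw [hBB]; exact hcnt1
  have hz : Multiset.count p.1 ({c₁, c₂} : Multiset Blk) = 0 := by
    rw [Multiset.count_eq_zero]
    simp only [Multiset.insert_eq_cons, Multiset.mem_cons, Multiset.mem_singleton]
    obtain ⟨hne1, hne2⟩ := F8 p hp
    rintro (h | h)
    · exact hne1 h.symm
    · exact hne2 h.symm
  rw [hB', Multiset.count_add, hz, hrest1] at hcnt'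
  exact absurd hcnt' (by norm_num)

theorem hHalf : DGDDDefiningSetsAtLeastHalf 25 5 2 Gs Bm := by
  intro S hS
  obtain ⟨hSB, huniq⟩ := hS
  have hmem := hmem_pairs hSB huniq
  have hnodupS : S.Nodup := Multiset.nodup_of_le hSB hBmNodup
  have hinj := Finset.card_le_card_of_injOn
    (f := fun p : Blk × Blk => if p.1 ∈ S then p.1 else p.2)
    (s := pairs.toFinset) (t := S.toFinset) ?_ ?_
  · have hpcard : pairs.toFinset.card = 50 := by
      rw [List.toFinset_card_of_nodup F10]; rfl
    have hScard : S.toFinset.card = Multiset.card S :=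
      Multiset.toFinset_card_of_nodup hnodupS
    have hBcard : Multiset.card Bm = 100 := by rfl
    omega
  · intro p hp
    have hp' := List.mem_toFinset.mp hp
    by_cases h : p.1 ∈ S
    · simp [h, Multiset.mem_toFinset]
    · have h2 := (hmem p hp').resolve_left h
      simp [h, Multiset.mem_toFinset, h2]
  · intro p hp q hq hfq
    by_contra hne
    have h9 := F9 p (List.mem_toFinset.mp hp) q (List.mem_toFinset.mp hq) hne
    obtain ⟨h1, h2, h3, h4⟩ := h9
    have hfq' : (if p.1 ∈ S then p.1 else p.2) = (if q.1 ∈ S then q.1 else q.2) := hfq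
    split at hfq' <;> split at hfq' <;> simp_all

theorem main : ExistsSuperSimpleDGDDHalf 5 2 (Multiset.replicate 5 5) :=
  ⟨25, Gs, Bm, hDGDD, hSS, htype, hHalf⟩

end DGDD55

/-- There exists a super-simple `(5,2)`-DGDD of group type `5⁵`
(five groups each of size `5`) with `d ≥ 1/2`. -/
theorem exists_superSimple_DGDD_type_5_5 :
    ExistsSuperSimpleDGDDHalf 5 2 (Multiset.replicate 5 5) := DGDD55.main
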